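/- In the ring R = k[x₁, x₂, …, y]/(x_i x_j, y^i x_i : i, j ≥ 1), let h be the R-module endomorphism of the y-power torsion submodule t(R) determined by h(x_n) = y·x_{n+1} for all n ≥ 1, and let M be the direct limit (colimit) of the chain t(R) →h t(R) →h t(R) →h ⋯ in the category of R-modules. Then M ≠ 0 and multiplication by y is surjective on M, i.e. y·M = M; in particular M is a nonzero module divisible with respect to the filter of ideals containing a power of (y). -/

import Mathlib

open MvPolynomial

set_option maxHeartbeats 1000000
set_option synthInstance.maxHeartbeats 400000

noncomputable section

/-- The polynomial ring `k[x₁, x₂, …, y]`, with `y` the variable `none` and `xₙ` (`n ≥ 1`)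
the variable `some n`. -/
abbrev PolyR (k : Type) [Field k] : Type := MvPolynomial (Option ℕ+) k

/-- The variable `y`. -/
def yP (k : Type) [Field k] : PolyR k := X none

/-- The variable `xₙ`, for `n ≥ 1`. -/
def xP (k : Type) [Field k] (n : ℕ+) : PolyR k := X (some n)

/-- The set of relations `xᵢxⱼ` (`i, j ≥ 1`) and `yⁱxᵢ` (`i ≥ 1`). -/
def relSet (k : Type) [Field k] : Set (PolyR k) :=
  {p | (∃ i j : ℕ+, p = xP k i * xP k j) ∨ (∃ i : ℕ+, p = yP k ^ (i : ℕ) * xP k i)}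

/-- The ring `R = k[x₁, x₂, …, y]/(xᵢxⱼ, yⁱxᵢ : i, j ≥ 1)`. -/
abbrev Rg (k : Type) [Field k] : Type := PolyR k ⧸ Ideal.span (relSet k)

/-- The image of `y` in `R`. -/
def yR (k : Type) [Field k] : Rg k := Ideal.Quotient.mk _ (yP k)

/-- The image of `xₙ` in `R`. -/
def xR (k : Type) [Field k] (n : ℕ+) : Rg k := Ideal.Quotient.mk _ (xP k n)

/-- The `y`-power torsion submodule `t(R) = {r ∈ R : yᵏ r = 0 for some k ≥ 0}`. -/
def tR (k : Type) [Field k] : Submodule (Rg k) (Rg k) :=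
  Submodule.torsion' (Rg k) (Rg k) (Submonoid.powers (yR k))

end

section AuxLemmas

variable (k : Type) [Field k]

lemma xR_mem_tR (n : ℕ+) : xR k n ∈ tR k := by
  refine (Submodule.mem_torsion'_iff _ _).2 ⟨⟨yR k ^ (n:ℕ), ⟨(n:ℕ), rfl⟩⟩, ?_⟩
  show yR k ^ (n:ℕ) • xR k n = 0
  rw [smul_eq_mul]
  have : (Ideal.Quotient.mk (Ideal.span (relSet k))) (yP k ^ (n:ℕ) * xP k n) = 0 := by
    rw [Ideal.Quotient.eq_zero_iff_mem]
    exact Ideal.subset_span (Or.inr ⟨n, rfl⟩)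
  simpa [yR, xR, map_mul, map_pow] using this

lemma ypow_mul_x_ne_zero (m : ℕ) : yR k ^ m * xR k ⟨m+1, Nat.succ_pos m⟩ ≠ 0 := by
  set A := Polynomial k ⧸ Ideal.span ({Polynomial.X ^ (2*m+2)} : Set (Polynomial k)) with hA
  set mkA := Ideal.Quotient.mk (Ideal.span ({Polynomial.X ^ (2*m+2)} : Set (Polynomial k)))
  set v : Option ℕ+ → A := fun o => o.elim (mkA Polynomial.X)
    (fun i => if (i : ℕ) = m + 1 then mkA (Polynomial.X ^ (m+1)) else 0) with hv
  set ψ : PolyR k →ₐ[k] A := aeval v with hψ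
  have hXX : mkA Polynomial.X ^ (m+1) * mkA Polynomial.X ^ (m+1) = 0 := by
    rw [← pow_add, ← map_pow, Ideal.Quotient.eq_zero_iff_mem]
    exact Ideal.subset_span (by rw [show m+1+(m+1) = 2*m+2 by ring]; exact Set.mem_singleton _)
  have hker : ∀ p ∈ Ideal.span (relSet k), ψ p = 0 := by
    intro p hp
    have hle : Ideal.span (relSet k) ≤ RingHom.ker (ψ : PolyR k →+* A) := by
      rw [Ideal.span_le]
      rintro q (⟨i, j, rfl⟩ | ⟨i, rfl⟩)
      · simp only [RingHom.mem_ker, SetLike.mem_coe]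
        show ψ (xP k i * xP k j) = 0
        rw [map_mul]
        simp only [hψ, xP, aeval_X, hv]
        by_cases hi : (i:ℕ) = m + 1 <;> by_cases hj : (j:ℕ) = m + 1 <;>
          simp [hi, hj, hXX, Option.elim, map_pow]
      · simp only [RingHom.mem_ker, SetLike.mem_coe]
        show ψ (yP k ^ (i:ℕ) * xP k i) = 0
        rw [map_mul, map_pow]
        simp only [hψ, xP, yP, aeval_X, hv]
        by_cases hi : (i:ℕ) = m + 1
        · simp [hi, Option.elim, map_pow, hXX]
        · simp [hi, Option.elim]
    exact hle hp
  intro hzero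
  have hmem : yP k ^ m * xP k ⟨m+1, Nat.succ_pos m⟩ ∈ Ideal.span (relSet k) := by
    rw [← Ideal.Quotient.eq_zero_iff_mem]
    have : (Ideal.Quotient.mk (Ideal.span (relSet k))) (yP k ^ m * xP k ⟨m+1, Nat.succ_pos m⟩)
        = yR k ^ m * xR k ⟨m+1, Nat.succ_pos m⟩ := by
      simp [yR, xR, map_mul, map_pow]
    rw [this]; exact hzero
  have := hker _ hmem
  rw [map_mul, map_pow] at this
  simp only [hψ, yP, xP, aeval_X, hv, Option.elim, PNat.mk_coe, if_pos, map_pow] at this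
  have h2 : mkA (Polynomial.X ^ (m + (m+1))) = 0 := by
    rw [show (Polynomial.X : Polynomial k) ^ (m+(m+1))
        = Polynomial.X ^ m * Polynomial.X ^ (m+1) from pow_add _ _ _,
      map_mul, map_pow, map_pow]; exact this
  have h3 := Ideal.mem_span_singleton.mp (Ideal.Quotient.eq_zero_iff_mem.mp h2)
  have hne : (Polynomial.X : Polynomial k) ^ (m + (m+1)) ≠ 0 :=
    pow_ne_zero _ Polynomial.X_ne_zero
  have := Polynomial.natDegree_le_of_dvd h3 hne
  simp [Polynomial.natDegree_X_pow] at this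
  omega

lemma tR_le_span : tR k ≤ Submodule.span (Rg k) (Set.range (xR k)) := by
  intro a ha
  obtain ⟨⟨s, hs⟩, hsa⟩ := (Submodule.mem_torsion'_iff _ _).1 ha
  obtain ⟨j, rfl⟩ := hs
  obtain ⟨p, rfl⟩ := Ideal.Quotient.mk_surjective a
  have hya : yR k ^ j * (Ideal.Quotient.mk (Ideal.span (relSet k)) p) = 0 := by
    exact hsa
  have hmem : yP k ^ j * p ∈ Ideal.span (relSet k) := by
    rw [← Ideal.Quotient.eq_zero_iff_mem]
    simpa [map_mul, map_pow, yR] using hya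
  set φ : PolyR k →ₐ[k] PolyR k :=
    aeval (fun o => Option.elim o (X none) (fun _ => 0)) with hφ
  have hφrel : ∀ q ∈ Ideal.span (relSet k), φ q = 0 := by
    intro q hq
    have hle : Ideal.span (relSet k) ≤ RingHom.ker (φ : PolyR k →+* PolyR k) := by
      rw [Ideal.span_le]
      rintro r (⟨i, j', rfl⟩ | ⟨i, rfl⟩) <;>
        simp [SetLike.mem_coe, RingHom.mem_ker, hφ, xP, yP, map_mul, map_pow, Option.elim]
    exact hle hq
  have hφp : φ p = 0 := by
    have h0 := hφrel _ hmem
    rw [map_mul, map_pow] at h0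
    have hy : φ (yP k) = X none := by simp [hφ, yP, Option.elim]
    rw [hy] at h0
    rcases mul_eq_zero.1 h0 with h1 | h1
    · exact absurd h1 (pow_ne_zero _ (X_ne_zero _))
    · exact h1
  have hsub : ∀ q : PolyR k, q - φ q ∈ Ideal.span (Set.range (xP k)) := by
    intro q
    induction q using MvPolynomial.induction_on with
    | C a => simp [hφ]
    | add p1 p2 h1 h2 =>
      have := add_mem h1 h2
      rw [map_add]
      convert this using 1
      ring
    | mul_X p1 i h1 =>
      cases i with
      | none =>
        rw [map_mul, show φ (X none) = X none by simp [hφ, Option.elim]]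
        have : p1 * X none - φ p1 * X none = (p1 - φ p1) * X none := by ring
        rw [this]
        exact Ideal.mul_mem_right _ _ h1
      | some n =>
        rw [map_mul, show φ (X (some n)) = 0 by simp [hφ, Option.elim], mul_zero, sub_zero]
        exact Ideal.mul_mem_left _ _ (Ideal.subset_span ⟨n, rfl⟩)
  have hp : p ∈ Ideal.span (Set.range (xP k)) := by
    have := hsub p
    rwa [hφp, sub_zero] at this
  refine Submodule.span_induction ?_ ?_ ?_ ?_ hp
  · rintro q ⟨n, rfl⟩
    exact Submodule.subset_span ⟨n, rfl⟩
  · simp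
  · intro q r _ _ hq hr
    rw [map_add]; exact add_mem hq hr
  · intro c q _ hq
    rw [smul_eq_mul, map_mul, ← smul_eq_mul]
    exact Submodule.smul_mem _ _ hq

lemma directedSystem_h (h : tR k →ₗ[Rg k] tR k) :
    DirectedSystem (fun _ : ℕ => tR k) (fun i j (_ : i ≤ j) => ⇑(h ^ (j - i))) := by
  constructor
  · intro i x
    simp [Nat.sub_self]
  · intro l j i hij hjl x
    have e1 : (h ^ (l - j)) ((h ^ (j - i)) x) = ((h ^ (l - j)) * (h ^ (j - i))) x := rfl
    rw [e1, ← pow_add, tsub_add_tsub_cancel hjl hij]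

lemma key_h (h : tR k →ₗ[Rg k] tR k)
    (hh : ∀ (n : ℕ+) (a : tR k), (a : Rg k) = xR k n →
      ((h a : Rg k) = yR k * xR k (n + 1))) (m : ℕ) :
    ((h ^ m) (⟨xR k 1, xR_mem_tR k 1⟩ : tR k) : Rg k)
      = yR k ^ m * xR k ⟨m + 1, Nat.succ_pos m⟩ := by
  induction m with
  | zero =>
    simp only [pow_zero, Module.End.one_apply, one_mul]
    rfl
  | succ m ih =>
    set n' : ℕ+ := ⟨m + 1, Nat.succ_pos m⟩ with hn'
    have hmem' := xR_mem_tR k n'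
    have h1 : (h ^ m) (⟨xR k 1, xR_mem_tR k 1⟩ : tR k)
        = yR k ^ m • (⟨xR k n', hmem'⟩ : tR k) :=
      Subtype.ext (by rw [ih]; rfl)
    have h3 : (h (⟨xR k n', hmem'⟩ : tR k) : Rg k)
        = yR k * xR k (n' + 1) := hh n' _ rfl
    have h4 : xR k (n' + 1) = xR k ⟨m+1+1, Nat.succ_pos (m+1)⟩ := rfl
    have h5 : (h ^ (m+1)) (⟨xR k 1, xR_mem_tR k 1⟩ : tR k)
        = yR k ^ m • h ⟨xR k n', hmem'⟩ := by
      rw [pow_succ', Module.End.mul_apply, h1, map_smul]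
    rw [h5, Submodule.coe_smul, smul_eq_mul, h3, h4, pow_succ]
    ring

lemma of_x1_ne_zero (h : tR k →ₗ[Rg k] tR k)
    (hh : ∀ (n : ℕ+) (a : tR k), (a : Rg k) = xR k n →
      ((h a : Rg k) = yR k * xR k (n + 1))) :
    Module.DirectLimit.of (Rg k) ℕ (fun _ : ℕ => tR k)
      (fun i j _ => (h ^ (j - i) : tR k →ₗ[Rg k] tR k)) 0
      (⟨xR k 1, xR_mem_tR k 1⟩ : tR k) ≠ 0 := by
  haveI := directedSystem_h k h
  intro H
  obtain ⟨j, hij, hj⟩ := Module.DirectLimit.of.zero_exact H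
  have h0 : ((h ^ (j - 0)) (⟨xR k 1, xR_mem_tR k 1⟩ : tR k) : Rg k) = 0 := by rw [hj]; rfl
  exact ypow_mul_x_ne_zero k (j - 0) (by rw [← key_h k h hh (j - 0), h0])

lemma main_h (h : tR k →ₗ[Rg k] tR k)
    (hh : ∀ (n : ℕ+) (a : tR k), (a : Rg k) = xR k n →
      ((h a : Rg k) = yR k * xR k (n + 1)))
    (r : Rg k) (hr : r ∈ Submodule.span (Rg k) (Set.range (xR k))) :
    ∀ (hrt : r ∈ tR k), ∃ c : tR k, h ⟨r, hrt⟩ = yR k • c := by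
  have hle : Submodule.span (Rg k) (Set.range (xR k)) ≤ tR k :=
    Submodule.span_le.2 (by rintro r ⟨n, rfl⟩; exact xR_mem_tR k n)
  refine Submodule.span_induction ?_ ?_ ?_ ?_ hr
  · rintro s ⟨n, rfl⟩ hst
    refine ⟨⟨xR k (n+1), xR_mem_tR k _⟩, Subtype.ext ?_⟩
    rw [hh n ⟨xR k n, hst⟩ rfl]
    rfl
  · intro h0t
    refine ⟨0, ?_⟩
    have e0 : (⟨(0 : Rg k), h0t⟩ : tR k) = 0 := Subtype.ext rfl
    rw [e0, map_zero, smul_zero]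
  · intro u v hu hv ihu ihv huvt
    obtain ⟨c1, hc1⟩ := ihu (hle hu)
    obtain ⟨c2, hc2⟩ := ihv (hle hv)
    refine ⟨c1 + c2, ?_⟩
    have e1 : (⟨u + v, huvt⟩ : tR k) = ⟨u, hle hu⟩ + ⟨v, hle hv⟩ := Subtype.ext rfl
    rw [e1, map_add, hc1, hc2, smul_add]
  · intro r u hu ihu hrut
    obtain ⟨c, hc⟩ := ihu (hle hu)
    refine ⟨r • c, ?_⟩
    have e1 : (⟨r • u, hrut⟩ : tR k) = r • (⟨u, hle hu⟩ : tR k) := Subtype.ext rfl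
    rw [e1, map_smul, hc]
    refine Subtype.ext ?_
    rw [Submodule.coe_smul, Submodule.coe_smul, Submodule.coe_smul, Submodule.coe_smul,
      smul_eq_mul, smul_eq_mul, smul_eq_mul, smul_eq_mul]
    ring

lemma surj_h (h : tR k →ₗ[Rg k] tR k)
    (hh : ∀ (n : ℕ+) (a : tR k), (a : Rg k) = xR k n →
      ((h a : Rg k) = yR k * xR k (n + 1))) :
    Function.Surjective
      (fun m : Module.DirectLimit (R := Rg k) (ι := ℕ) (fun _ : ℕ => tR k)
          (fun i j _ => (h ^ (j - i) : tR k →ₗ[Rg k] tR k)) =>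
        yR k • m) := by
  intro z
  obtain ⟨i, a, rfl⟩ := Module.DirectLimit.exists_of z
  have hspan : (a : Rg k) ∈ Submodule.span (Rg k) (Set.range (xR k)) := tR_le_span k a.2
  obtain ⟨c, hc⟩ := main_h k h hh (a : Rg k) hspan a.2
  have ha : (⟨(a : Rg k), a.2⟩ : tR k) = a := Subtype.ext rfl
  rw [ha] at hc
  refine ⟨Module.DirectLimit.of (Rg k) ℕ (fun _ : ℕ => tR k)
    (fun i j _ => (h ^ (j - i) : tR k →ₗ[Rg k] tR k)) (i+1) c, ?_⟩
  show yR k • Module.DirectLimit.of (Rg k) ℕ (fun _ : ℕ => tR k)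
    (fun i j _ => (h ^ (j - i) : tR k →ₗ[Rg k] tR k)) (i+1) c = _
  rw [← map_smul, ← hc]
  have e2 : h a = (h ^ ((i+1) - i)) a := by
    rw [show i + 1 - i = 1 from Nat.add_sub_cancel_left i 1, pow_one]
  rw [e2]
  exact Module.DirectLimit.of_f (hij := Nat.le_succ i)

end AuxLemmas

/-- In `R = k[x₁, x₂, …, y]/(xᵢxⱼ, yⁱxᵢ)`, let `h` be the endomorphism of
`t(R)` with `h(xₙ) = y·x_{n+1}`, and let `M` be the direct limit of the chain
`t(R) → t(R) → ⋯` with transition maps (iterates of) `h`. Then `M ≠ 0` and multiplication by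
`y` is surjective on `M`; in particular `M` is a nonzero divisible module with respect to the
filter of ideals containing a power of `(y)`. -/
theorem stmt_14 (k : Type) [Field k] (h : tR k →ₗ[Rg k] tR k)
    (hh : ∀ (n : ℕ+) (a : tR k), (a : Rg k) = xR k n →
      ((h a : Rg k) = yR k * xR k (n + 1))) :
    Nontrivial (Module.DirectLimit (R := Rg k) (ι := ℕ) (fun _ : ℕ => tR k)
      (fun i j _ => (h ^ (j - i) : tR k →ₗ[Rg k] tR k))) ∧
    Function.Surjective
      (fun m : Module.DirectLimit (R := Rg k) (ι := ℕ) (fun _ : ℕ => tR k)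
          (fun i j _ => (h ^ (j - i) : tR k →ₗ[Rg k] tR k)) =>
        yR k • m) := by
  exact ⟨⟨_, 0, of_x1_ne_zero k h hh⟩, surj_h k h hh⟩
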